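/- For every real t with 0 < t < 2, with z₁(t) := t(1+t/2)^{1/2}, z₂(t) := t, z₃(t) := t(1−t/2)^{−1/2}, Y_{1,s} := Ỹ_s/Y_s and S_{1,s} := S̃_s − S_s: (i) S_{1,1}(t)·Y_{1,1}(t)^{1/8}·Y₁(t)^{−1/4} + 2·z₁(t)^{1/2}·Z₁(t) = 0; (ii) S_{1,2}(t)·Y_{1,2}(t)^{1/4}·Y₂(t)^{−1/2} + 2·z₂(t)^{1/2}·Z₂(t) = 0; (iii) S_{1,3}(t)·Y_{1,3}(t)^{3/8}·Y₃(t)^{−3/4} + 2·z₃(t)^{1/2}·Z₃(t) = 0. (All fractional powers are real powers of positive real numbers; these are the instances s = 1, 2, 3 of S_{1,s}·Y_{1,s}^{s/8}·Y_s^{−s/4} + 2z^{1/2}Z_s = 0.) -/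

import Mathlib

/-! Göttsche–Kool universal functions of a real variable `t`, with all square
roots the nonnegative real square roots.  The `t`-suffixed versions
(`gkYt`, `gkZt`, `gkSt`) are the sign-flipped functions obtained by
replacing `√t` with `−√t`. -/

noncomputable def gkY1 (t : ℝ) : ℝ := (1 + t) + Real.sqrt t * Real.sqrt (1 + 3*t/4)
noncomputable def gkYt1 (t : ℝ) : ℝ := (1 + t) - Real.sqrt t * Real.sqrt (1 + 3*t/4)
noncomputable def gkY2 (t : ℝ) : ℝ := Real.sqrt t + Real.sqrt (1 + t)
noncomputable def gkYt2 (t : ℝ) : ℝ := -Real.sqrt t + Real.sqrt (1 + t)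
noncomputable def gkY3 (t : ℝ) : ℝ := 1 + Real.sqrt t * Real.sqrt (1 - t/4)
noncomputable def gkYt3 (t : ℝ) : ℝ := 1 - Real.sqrt t * Real.sqrt (1 - t/4)
noncomputable def gkZ1 (t : ℝ) : ℝ :=
  (1 + 3*t/4 - (1/2) * Real.sqrt t * Real.sqrt (1 + 3*t/4)) / (1 + t/2)
noncomputable def gkZt1 (t : ℝ) : ℝ :=
  (1 + 3*t/4 + (1/2) * Real.sqrt t * Real.sqrt (1 + 3*t/4)) / (1 + t/2)
noncomputable def gkZ2 (t : ℝ) : ℝ := 1 + t - Real.sqrt t * Real.sqrt (1 + t)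
noncomputable def gkZt2 (t : ℝ) : ℝ := 1 + t + Real.sqrt t * Real.sqrt (1 + t)
noncomputable def gkZ3 (t : ℝ) : ℝ :=
  (1 + t/2) * ((1 - t/4)*(1 + t/2)
    - (3/2) * Real.sqrt t * Real.sqrt (1 - t/4) * (1 - t/6)) / (1 - t/2)^3
noncomputable def gkZt3 (t : ℝ) : ℝ :=
  (1 + t/2) * ((1 - t/4)*(1 + t/2)
    + (3/2) * Real.sqrt t * Real.sqrt (1 - t/4) * (1 - t/6)) / (1 - t/2)^3
noncomputable def gkS1 (t : ℝ) : ℝ := -t/2 + Real.sqrt t * Real.sqrt (1 + 3*t/4)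
noncomputable def gkSt1 (t : ℝ) : ℝ := -t/2 - Real.sqrt t * Real.sqrt (1 + 3*t/4)
noncomputable def gkS2 (t : ℝ) : ℝ := -t + Real.sqrt t * Real.sqrt (1 + t)
noncomputable def gkSt2 (t : ℝ) : ℝ := -t - Real.sqrt t * Real.sqrt (1 + t)
noncomputable def gkS3 (t : ℝ) : ℝ :=
  (-(3/2)*t*(1 - t/6) + Real.sqrt t * Real.sqrt (1 - t/4) * (1 + t/2)) / (1 - t/2)
noncomputable def gkSt3 (t : ℝ) : ℝ :=
  (-(3/2)*t*(1 - t/6) - Real.sqrt t * Real.sqrt (1 - t/4) * (1 + t/2)) / (1 - t/2)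
noncomputable def gkV2 (t : ℝ) : ℝ := (1 + t)^2
noncomputable def gkV3 (t : ℝ) : ℝ := (1 + t/2)^3 / (1 - t/2)
noncomputable def gkW1 (t : ℝ) : ℝ := (1 + t/2)⁻¹
noncomputable def gkW2 (t : ℝ) : ℝ := (Real.sqrt (1 + t))⁻¹
noncomputable def gkW3 (t : ℝ) : ℝ := 2 / (2 + t)
noncomputable def gkX1 (t : ℝ) : ℝ :=
  (1 + t/2) ^ (-(3:ℝ)/4) * (1 + 3*t/4) ^ (-(1:ℝ)/2)
noncomputable def gkX2 (t : ℝ) : ℝ := (1 + t) ^ (-(3:ℝ)/2)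
noncomputable def gkX3 (t : ℝ) : ℝ :=
  (1 - t/2) ^ ((3:ℝ)/4) * (1 - t/4) ^ (-(1:ℝ)/2) * (1 + t/2) ^ (-(4:ℝ))



private lemma gk_pow_helper (Yt c p q r s : ℝ) (hYt : 0 < Yt) (hc : 0 < c)
    (hq : q = -(2*p)) (hr : r = 4*p) (hs : s = -(6*p)) :
    (Yt / (c^2/Yt)) ^ p * (c^2/Yt) ^ q = Yt ^ r * c ^ s := by
  subst hq hr hs
  have hx : (0:ℝ) < Yt / c := by positivity
  have e1 : (Yt / (c^2/Yt)) ^ p = Yt ^ (2*p) * c ^ (-(2*p)) := by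
    rw [show Yt / (c^2/Yt) = (Yt/c)^2 by field_simp]
    have h0 : ((Yt/c) ^ (2:ℕ)) ^ p = (Yt/c) ^ (2*p) := by
      rw [← Real.rpow_natCast (Yt/c) 2, ← Real.rpow_mul hx.le]; norm_num
    rw [h0, Real.div_rpow hYt.le hc.le, Real.rpow_neg hc.le, div_eq_mul_inv]
  have e2 : (c^2/Yt) ^ (-(2*p)) = Yt ^ (2*p) * c ^ (-(4*p)) := by
    have h1 : (c^2/Yt) ^ (-(2*p)) = ((c^2/Yt) ^ (2*p))⁻¹ := Real.rpow_neg (by positivity) _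
    have h2 : (c^2/Yt) ^ (2*p) = c ^ (4*p) / Yt ^ (2*p) := by
      rw [Real.div_rpow (by positivity) hYt.le, ← Real.rpow_natCast c 2,
        ← Real.rpow_mul hc.le, show ((2:ℕ):ℝ)*(2*p) = 4*p by push_cast; ring]
    rw [h1, h2, inv_div, div_eq_mul_inv, ← Real.rpow_neg hc.le]
  rw [e1, e2, mul_mul_mul_comm, ← Real.rpow_add hYt, ← Real.rpow_add hc,
    show 2*p+2*p = 4*p by ring, show -(2*p) + -(4*p) = -(6*p) by ring]

private lemma rpow_shift (c : ℝ) (hc : 0 < c) (x y : ℝ) (n : ℕ) (h : y = x + n) :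
    c ^ y = c ^ x * c ^ n := by
  rw [h, Real.rpow_add hc, Real.rpow_natCast]

private lemma gk_case1 (t : ℝ) (ht0 : 0 < t) (ht2 : t < 2) :
    (gkSt1 t - gkS1 t) * (gkYt1 t / gkY1 t) ^ ((1:ℝ)/8) * gkY1 t ^ (-(1:ℝ)/4)
        + 2 * Real.sqrt (t * Real.sqrt (1 + t/2)) * gkZ1 t = 0 := by
  unfold gkSt1 gkS1 gkYt1 gkY1 gkZ1
  set a := Real.sqrt t with ha'
  set b := Real.sqrt (1 + 3*t/4) with hb'
  have ha : a^2 = t := Real.sq_sqrt ht0.le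
  have hb : b^2 = 1 + 3*t/4 := Real.sq_sqrt (by linarith)
  have ha0 : 0 ≤ a := Real.sqrt_nonneg t
  have hb0 : 0 < b := Real.sqrt_pos.mpr (by linarith)
  have hc : (0:ℝ) < 1 + t/2 := by linarith
  have hab2 : (a*b)^2 = t*(1+3*t/4) := by rw [mul_pow, ha, hb]
  have hab0 : 0 ≤ a*b := mul_nonneg ha0 hb0.le
  have hYt : (0:ℝ) < 1 + t - a*b := by nlinarith [hab2, hab0]
  have hY : (1:ℝ) + t + a*b = (1+t/2)^2 / (1+t-a*b) := by
    rw [eq_div_iff hYt.ne']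
    linear_combination (-1 - 3/4*t)*ha + (-a^2)*hb
  rw [hY, mul_assoc,
    gk_pow_helper (1+t-a*b) (1+t/2) ((1:ℝ)/8) (-(1:ℝ)/4) ((1:ℝ)/2) (-(3:ℝ)/4)
      hYt hc (by norm_num) (by norm_num) (by norm_num),
    show ((1:ℝ)+t-a*b) ^ ((1:ℝ)/2) = Real.sqrt (1+t-a*b) from (Real.sqrt_eq_rpow _).symm]
  have hzc : Real.sqrt (t * Real.sqrt (1+t/2)) = a * (1+t/2) ^ ((1:ℝ)/4) := by
    rw [Real.sqrt_mul ht0.le, ← ha', Real.sqrt_eq_rpow (Real.sqrt (1+t/2)),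
      Real.sqrt_eq_rpow (1+t/2), ← Real.rpow_mul hc.le]
    norm_num
  rw [hzc]
  have h7 : (0:ℝ) ≤ 1 + 3*t/4 - 1/2*a*b := by nlinarith [hab2, hab0]
  have hsY : Real.sqrt (1+t-a*b) = (1 + 3*t/4 - 1/2*a*b)/b := by
    rw [eq_div_iff hb0.ne', mul_comm,
      show b * Real.sqrt (1+t-a*b) = Real.sqrt (b^2*(1+t-a*b)) by
        rw [Real.sqrt_mul (sq_nonneg b), Real.sqrt_sq hb0.le],
      show b^2*(1+t-a*b) = (1 + 3*t/4 - 1/2*a*b)^2 by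
        linear_combination (-(1:ℝ)/4 - 3/16*t)*ha + (1 - a*b - a^2/4 + t)*hb,
      Real.sqrt_sq h7]
  rw [hsY, rpow_shift (1+t/2) hc (-(3:ℝ)/4) ((1:ℝ)/4) 1 (by norm_num)]
  field_simp
  ring

private lemma gk_case2 (t : ℝ) (ht0 : 0 < t) (ht2 : t < 2) :
    (gkSt2 t - gkS2 t) * (gkYt2 t / gkY2 t) ^ ((1:ℝ)/4) * gkY2 t ^ (-(1:ℝ)/2)
        + 2 * Real.sqrt t * gkZ2 t = 0 := by
  unfold gkSt2 gkS2 gkYt2 gkY2 gkZ2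
  set a := Real.sqrt t with ha'
  set b := Real.sqrt (1 + t) with hb'
  have ha : a^2 = t := Real.sq_sqrt ht0.le
  have hb : b^2 = 1 + t := Real.sq_sqrt (by linarith)
  have hYt : (0:ℝ) < -a + b := by
    have := Real.sqrt_lt_sqrt ht0.le (show t < 1 + t by linarith)
    rw [← ha', ← hb'] at this; linarith
  have hY : a + b = (1:ℝ)^2 / (-a+b) := by
    rw [eq_div_iff hYt.ne']
    linear_combination hb - ha
  rw [hY, mul_assoc,
    gk_pow_helper (-a+b) 1 ((1:ℝ)/4) (-(1:ℝ)/2) ((1:ℝ)) (-(3:ℝ)/2)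
      hYt one_pos (by norm_num) (by norm_num) (by norm_num),
    Real.rpow_one, Real.one_rpow, mul_one]
  linear_combination (-2*a)*hb

set_option maxHeartbeats 1000000 in
private lemma gk_case3 (t : ℝ) (ht0 : 0 < t) (ht2 : t < 2) :
    (gkSt3 t - gkS3 t) * (gkYt3 t / gkY3 t) ^ ((3:ℝ)/8) * gkY3 t ^ (-(3:ℝ)/4)
        + 2 * Real.sqrt (t / Real.sqrt (1 - t/2)) * gkZ3 t = 0 := by
  unfold gkSt3 gkS3 gkYt3 gkY3 gkZ3
  set a := Real.sqrt t with ha'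
  set b := Real.sqrt (1 - t/4) with hb'
  have ha : a^2 = t := Real.sq_sqrt ht0.le
  have hb : b^2 = 1 - t/4 := Real.sq_sqrt (by linarith)
  have ha0 : 0 ≤ a := Real.sqrt_nonneg t
  have hb0 : 0 < b := Real.sqrt_pos.mpr (by linarith)
  have hc : (0:ℝ) < 1 - t/2 := by linarith
  have hab2 : (a*b)^2 = t*(1-t/4) := by rw [mul_pow, ha, hb]
  have hab0 : 0 ≤ a*b := mul_nonneg ha0 hb0.le
  have hYt : (0:ℝ) < 1 - a*b := by nlinarith [hab2, hab0, mul_pos hc hc]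
  have hY : (1:ℝ) + a*b = (1-t/2)^2 / (1-a*b) := by
    rw [eq_div_iff hYt.ne']
    linear_combination (-1 + t/4)*ha + (-a^2)*hb
  rw [hY, mul_assoc,
    gk_pow_helper (1-a*b) (1-t/2) ((3:ℝ)/8) (-(3:ℝ)/4) ((3:ℝ)/2) (-(9:ℝ)/4)
      hYt hc (by norm_num) (by norm_num) (by norm_num),
    show ((1:ℝ)-a*b) ^ ((3:ℝ)/2) = (1-a*b) * Real.sqrt (1-a*b) by
      rw [show (3:ℝ)/2 = 1 + 1/2 by norm_num, Real.rpow_add hYt, Real.rpow_one,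
        ← Real.sqrt_eq_rpow]]
  have hzc : Real.sqrt (t / Real.sqrt (1-t/2)) = a / (1-t/2) ^ ((1:ℝ)/4) := by
    rw [Real.sqrt_div ht0.le, ← ha', Real.sqrt_eq_rpow (Real.sqrt (1-t/2)),
      Real.sqrt_eq_rpow (1-t/2), ← Real.rpow_mul hc.le]
    norm_num
  rw [hzc]
  have hQ0 : (0:ℝ) ≤ 3/2*(a*b)*(1-t/6) :=
    mul_nonneg (mul_nonneg (by norm_num) hab0) (by linarith)
  have hq2 : ((3:ℝ)/2*(a*b)*(1-t/6))^2 = 9/4*t*(1-t/4)*(1-t/6)^2 := by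
    linear_combination ((9:ℝ)/4*(1-t/6)^2)*hab2
  have hP : (0:ℝ) < (1-t/4)*(1+t/2) := mul_pos (by linarith) (by linarith)
  have hpos : (0:ℝ) < (1-t/4)*(1-t/2)^3 := mul_pos (by linarith) (pow_pos hc 3)
  have hR3 : (0:ℝ) ≤ (1-t/4)*(1+t/2) - 3/2*(a*b)*(1-t/6) := by
    nlinarith [hq2, hQ0, hP, hpos]
  have hsY : Real.sqrt (1-a*b)
      = ((1-t/4)*(1+t/2) - 3/2*(a*b)*(1-t/6)) / (b*(1-a*b)) := by
    rw [eq_div_iff (mul_pos hb0 hYt).ne', mul_comm,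
      show b*(1-a*b) * Real.sqrt (1-a*b) = Real.sqrt ((b*(1-a*b))^2*(1-a*b)) by
        rw [Real.sqrt_mul (sq_nonneg _), Real.sqrt_sq (mul_nonneg hb0.le hYt.le)],
      show (b*(1-a*b))^2*(1-a*b) = ((1-t/4)*(1+t/2) - 3/2*(a*b)*(1-t/6))^2 by
        linear_combination (3/4 - a*b - 3/16*t + 1/2*t*(a*b) - 1/16*t^2 - 1/16*t^2*(a*b)
            + 1/64*t^3)*ha
          + (1 - 3*(a*b) + 3/4*a^2 + 3*a^2*b^2 - a^3*b - a^3*b^3 + 1/4*t*(a^3*b)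
            - 1/16*t^2*a^2)*hb,
      Real.sqrt_sq hR3]
  have h9 : (1-t/2) ^ (-(9:ℝ)/4) = ((1-t/2) ^ ((1:ℝ)/4) * (1-t/2)^2)⁻¹ := by
    rw [show (-(9:ℝ)/4) = -((9:ℝ)/4) by norm_num, Real.rpow_neg hc.le,
      rpow_shift (1-t/2) hc ((1:ℝ)/4) ((9:ℝ)/4) 2 (by norm_num)]
  rw [hsY, h9]
  have he : (0:ℝ) < (1-t/2) ^ ((1:ℝ)/4) := Real.rpow_pos_of_pos hc _
  set e := (1-t/2) ^ ((1:ℝ)/4) with he'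
  have u1 : (1-a*b) * (1-a*b)⁻¹ = 1 := mul_inv_cancel₀ hYt.ne'
  have u2 : b * b⁻¹ = 1 := mul_inv_cancel₀ hb0.ne'
  simp only [div_eq_mul_inv, mul_inv, ← inv_pow]
  linear_combination
    (-2*a*(1+t/2)*((1-t/4)*(1+t/2) - 3/2*a*b*(1-t/6))*e⁻¹*((1-t/2)⁻¹)^3) * u2
    + (-2*a*(1+t/2)*((1-t/4)*(1+t/2) - 3/2*a*b*(1-t/6))*(b*b⁻¹)*e⁻¹*((1-t/2)⁻¹)^3) * u1

/-- for `0 < t < 2`, with `z₁ = t(1+t/2)^{1/2}`, `z₂ = t`,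
`z₃ = t(1−t/2)^{−1/2}`, `Y_{1,s} = Ỹ_s/Y_s` and `S_{1,s} = S̃_s − S_s`, the
constraint `S_{1,s}·Y_{1,s}^{s/8}·Y_s^{−s/4} + 2 z_s^{1/2} Z_s = 0` holds
for `s = 1, 2, 3` (all fractional powers being real powers of positive
reals). -/
theorem stmt_14 (t : ℝ) (ht0 : 0 < t) (ht2 : t < 2) :
    (gkSt1 t - gkS1 t) * (gkYt1 t / gkY1 t) ^ ((1:ℝ)/8) * gkY1 t ^ (-(1:ℝ)/4)
        + 2 * Real.sqrt (t * Real.sqrt (1 + t/2)) * gkZ1 t = 0 ∧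
    (gkSt2 t - gkS2 t) * (gkYt2 t / gkY2 t) ^ ((1:ℝ)/4) * gkY2 t ^ (-(1:ℝ)/2)
        + 2 * Real.sqrt t * gkZ2 t = 0 ∧
    (gkSt3 t - gkS3 t) * (gkYt3 t / gkY3 t) ^ ((3:ℝ)/8) * gkY3 t ^ (-(3:ℝ)/4)
        + 2 * Real.sqrt (t / Real.sqrt (1 - t/2)) * gkZ3 t = 0 :=
  ⟨gk_case1 t ht0 ht2, gk_case2 t ht0 ht2, gk_case3 t ht0 ht2⟩
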